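/- Let F : F_2^m → F_2^m be a permutation and suppose L = (L_1,L_2) is a linear permutation of F_2^{2m} with L(G_F) = G_{F'} and L_1(x,y) = L(y) depends only on the second variable. Then F' is EA-equivalent to F^{-1}: there exist linear permutations R_1, R_2 and a linear function R with F' = R_1 ∘ F^{-1} ∘ R_2 + R. Moreover F and L must be permutations. -/

import Mathlib

/-- If `F` is a permutation and a linear permutation `𝓛 = (L₁, L₂)` of
`𝔽₂^{2m}` maps the graph of `F` to the graph of `F'`, where `L₁(x,y) = L(y)`
depends only on the second variable, then `F' = R₁ ∘ F⁻¹ ∘ R₂ + R` for some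
linear permutations `R₁, R₂` and a linear map `R`; moreover `L` is a
permutation. -/
theorem stmt_7 (m : ℕ) (F F' : (Fin m → ZMod 2) → (Fin m → ZMod 2))
    (hF : Function.Bijective F)
    (𝓛 : ((Fin m → ZMod 2) × (Fin m → ZMod 2)) ≃ₗ[ZMod 2]
         ((Fin m → ZMod 2) × (Fin m → ZMod 2)))
    (hL : 𝓛 '' {p | p.2 = F p.1} = {p | p.2 = F' p.1})
    (L : (Fin m → ZMod 2) →ₗ[ZMod 2] (Fin m → ZMod 2))
    (hdep : ∀ p : (Fin m → ZMod 2) × (Fin m → ZMod 2), (𝓛 p).1 = L p.2) :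
    (∃ (R₁ R₂ : (Fin m → ZMod 2) ≃ₗ[ZMod 2] (Fin m → ZMod 2))
       (R : (Fin m → ZMod 2) →ₗ[ZMod 2] (Fin m → ZMod 2)),
       ∀ x, F' x = R₁ (Function.invFun F (R₂ x)) + R x) ∧
    Function.Bijective L := by
  -- L is surjective
  have hLsurj : Function.Surjective L := by
    intro z
    obtain ⟨p, hp⟩ := 𝓛.surjective (z, 0)
    exact ⟨p.2, by rw [← hdep p, hp]⟩
  have hLinj : Function.Injective L :=
    (LinearMap.injective_iff_surjective).2 hLsurj
  have hLbij : Function.Bijective L := ⟨hLinj, hLsurj⟩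
  -- second component of 𝓛
  set M : ((Fin m → ZMod 2) × (Fin m → ZMod 2)) →ₗ[ZMod 2] (Fin m → ZMod 2) :=
    (LinearMap.snd (ZMod 2) _ _).comp 𝓛.toLinearMap with hM
  set M₁ : (Fin m → ZMod 2) →ₗ[ZMod 2] (Fin m → ZMod 2) :=
    M.comp (LinearMap.inl (ZMod 2) _ _) with hM1
  set M₂ : (Fin m → ZMod 2) →ₗ[ZMod 2] (Fin m → ZMod 2) :=
    M.comp (LinearMap.inr (ZMod 2) _ _) with hM2
  have hM1inj : Function.Injective M₁ := by
    rw [← LinearMap.ker_eq_bot, LinearMap.ker_eq_bot']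
    intro x hx
    have h1 : (𝓛 (x, 0)).1 = 0 := by rw [hdep (x, 0)]; simp
    have h2 : (𝓛 (x, 0)).2 = 0 := hx
    have : 𝓛 (x, (0 : Fin m → ZMod 2)) = 0 := Prod.ext h1 h2
    have := 𝓛.injective (this.trans (map_zero 𝓛).symm)
    exact congrArg Prod.fst this
  have hM1surj : Function.Surjective M₁ :=
    (LinearMap.injective_iff_surjective).1 hM1inj
  set Leq : (Fin m → ZMod 2) ≃ₗ[ZMod 2] (Fin m → ZMod 2) :=
    LinearEquiv.ofBijective L hLbij with hLeq
  refine ⟨⟨LinearEquiv.ofBijective M₁ ⟨hM1inj, hM1surj⟩, Leq.symm,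
    M₂.comp (Leq.symm : _ →ₗ[ZMod 2] _), ?_⟩, hLbij⟩
  intro x
  have hx : (x, F' x) ∈ {p : (Fin m → ZMod 2) × (Fin m → ZMod 2) | p.2 = F' p.1} := rfl
  rw [← hL] at hx
  obtain ⟨p, hp, hpx⟩ := hx
  have hp2 : p.2 = F p.1 := hp
  have h1 : L p.2 = x := by rw [← hdep p, hpx]
  have h2 : M p = F' x := by
    have : (𝓛 p).2 = F' x := by rw [hpx]
    simpa [hM] using this
  have hR2 : Leq.symm x = F p.1 := by
    rw [← hp2]
    apply Leq.injective
    simp [hLeq, LinearEquiv.ofBijective_apply, h1]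
  have hinv : Function.invFun F (F p.1) = p.1 :=
    Function.leftInverse_invFun hF.injective p.1
  rw [hR2]
  simp only [LinearEquiv.coe_coe, hinv, LinearEquiv.ofBijective_apply, hR2]
  have hsplit : M₁ p.1 + M₂ (F p.1) = M p := by
    rw [hM1, hM2]
    simp only [LinearMap.comp_apply, LinearMap.inl_apply, LinearMap.inr_apply]
    rw [← map_add]
    congr 1
    simp [Prod.ext_iff, hp2]
  rw [← h2, ← hsplit]
  simp [LinearMap.comp_apply, hR2]
  rfl
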